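/- Let A be a uogas on a finite set X, let x be a maximal element (no A-successor), let y belong to the s(A)-connected component of x, and let p = (p(0),...,p(n)) be the unique injective s(A)-path from y to x. Then (p(i), p(i+1)) ∈ A for all i < n; that is, the path from any point to the maximal element of its component always follows the orientation of A. -/
import Mathlib

/-- In a uogas on a finite set, the unique injective path (in the
symmetrization) from any point to the maximal element of its component follows
the orientation of `A`. -/
theorem stmt2 {X : Type*} [Finite X] (A : X → X → Prop)
    (hirr : ∀ x, ¬ A x x)
    (hanti : ∀ x y, A x y → A y x → x = y)
    (huo : ∀ x y z, A x y → A x z → y = z)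
    (hacyc : ¬ ∃ (n : ℕ) (f : ℕ → X), 2 ≤ n ∧
      (∀ i j, i ≤ n → j ≤ n → f i = f j → i = j) ∧
      (∀ i, i < n → (A (f i) (f (i+1)) ∨ A (f (i+1)) (f i))) ∧
      (A (f n) (f 0) ∨ A (f 0) (f n)))
    (x y : X) (hmax : ∀ z, ¬ A x z)
    (hconn : Relation.ReflTransGen (fun a b => A a b ∨ A b a) y x)
    (p : ℕ → X) (n : ℕ)
    (hp0 : p 0 = y) (hpn : p n = x)
    (hpath : ∀ i, i < n → (A (p i) (p (i+1)) ∨ A (p (i+1)) (p i)))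
    (hinj : ∀ i j, i ≤ n → j ≤ n → p i = p j → i = j) :
    ∀ i, i < n → A (p i) (p (i+1)) := by
  suffices h : ∀ k, ∀ i, i < n → n - (i+1) = k → A (p i) (p (i+1)) by
    intro i hi; exact h _ i hi rfl
  intro k
  induction k with
  | zero =>
    intro i hi hk
    have hin : i + 1 = n := by omega
    rcases hpath i hi with h | h
    · exact h
    · exfalso; rw [hin, hpn] at h; exact hmax _ h
  | succ k ih =>
    intro i hi hk
    have hi1 : i + 1 < n := by omega
    have hnext := ih (i+1) hi1 (by omega)
    rcases hpath i hi with h | h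
    · exact h
    · exfalso
      have heq := huo _ _ _ h hnext
      have := hinj i (i+2) (by omega) (by omega) heq
      omega
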